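/- Let (Ω, 𝓕, ℙ) be a probability space, let P : Ω → Matrix(m,n,ℝ) be a random matrix with entrywise expectation E[P] = P̄, and let S : Ω → Matrix(n,n,ℝ) be almost surely symmetric positive definite with E[S] = I (the identity), with all expressions below entrywise integrable. Then the matrix E[P · S⁻¹ · Pᵀ] − P̄ · P̄ᵀ is positive semidefinite. -/

import Mathlib

open Matrix MeasureTheory

/-- Integral commutes with the quadratic-form-like expression `u ⬝ᵥ A ω *ᵥ w`. -/
lemma integral_dotProduct_mulVec {Ω : Type*} [MeasurableSpace Ω] (ℙ : Measure Ω)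
    {m n : ℕ} (A : Ω → Matrix (Fin m) (Fin n) ℝ)
    (hA : ∀ i j, Integrable (fun ω => A ω i j) ℙ)
    (u : Fin m → ℝ) (w : Fin n → ℝ) :
    ∫ ω, u ⬝ᵥ (A ω) *ᵥ w ∂ℙ
      = u ⬝ᵥ (Matrix.of fun i j => ∫ ω, A ω i j ∂ℙ) *ᵥ w := by
  have hcalc : ∀ ω, u ⬝ᵥ (A ω) *ᵥ w = ∑ i, ∑ j, u i * (A ω i j * w j) := by
    intro ω
    simp [dotProduct, Matrix.mulVec, Finset.mul_sum]
  have hint1 : ∀ (i : Fin m) (j : Fin n),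
      Integrable (fun ω => u i * (A ω i j * w j)) ℙ := fun i j =>
    (((hA i j).mul_const (w j)).const_mul (u i))
  calc ∫ ω, u ⬝ᵥ (A ω) *ᵥ w ∂ℙ
      = ∫ ω, ∑ i, ∑ j, u i * (A ω i j * w j) ∂ℙ := by
        simp only [hcalc]
    _ = ∑ i, ∑ j, ∫ ω, u i * (A ω i j * w j) ∂ℙ := by
        rw [integral_finset_sum]
        · exact Finset.sum_congr rfl fun i _ =>
            integral_finset_sum _ (fun j _ => hint1 i j)
        · exact fun i _ => integrable_finset_sum _ (fun j _ => hint1 i j)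
    _ = ∑ i, ∑ j, u i * ((∫ ω, A ω i j ∂ℙ) * w j) := by
        refine Finset.sum_congr rfl fun i _ => Finset.sum_congr rfl fun j _ => ?_
        rw [integral_const_mul, integral_mul_const]
    _ = u ⬝ᵥ (Matrix.of fun i j => ∫ ω, A ω i j ∂ℙ) *ᵥ w := by
        simp [dotProduct, Matrix.mulVec, Finset.mul_sum]

/-- Pointwise key inequality: for `S` positive definite,
`2 ⟨x̄, x⟩ - ⟨x̄, S x̄⟩ ≤ ⟨x, S⁻¹ x⟩`. -/
lemma key_pointwise {n : ℕ} {S : Matrix (Fin n) (Fin n) ℝ} (hS : S.PosDef)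
    (x xb : Fin n → ℝ) :
    2 * (xb ⬝ᵥ x) - xb ⬝ᵥ S *ᵥ xb ≤ x ⬝ᵥ S⁻¹ *ᵥ x := by
  have hBpd : (S⁻¹).PosDef := hS.inv
  have hBsym : (S⁻¹)ᵀ = S⁻¹ := by
    symm; simpa using congrArg Matrix.transpose hBpd.1
  have hSsym : Sᵀ = S := by
    symm; simpa using congrArg Matrix.transpose hS.1
  have hdet : IsUnit S.det := isUnit_iff_ne_zero.mpr (ne_of_gt hS.det_pos)
  set z : Fin n → ℝ := S *ᵥ xb with hz
  have hBz : S⁻¹ *ᵥ z = xb := by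
    rw [hz, Matrix.mulVec_mulVec, Matrix.nonsing_inv_mul S hdet, Matrix.one_mulVec]
  have h0 : 0 ≤ (x - z) ⬝ᵥ S⁻¹ *ᵥ (x - z) := by
    have := hBpd.posSemidef.dotProduct_mulVec_nonneg (x - z)
    simpa using this
  have hsym : ∀ (B : Matrix (Fin n) (Fin n) ℝ), Bᵀ = B →
      ∀ a b : Fin n → ℝ, a ⬝ᵥ B *ᵥ b = b ⬝ᵥ B *ᵥ a := by
    intro B hB a b
    rw [Matrix.dotProduct_mulVec, ← Matrix.mulVec_transpose, hB, dotProduct_comm]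
  have hexp : (x - z) ⬝ᵥ S⁻¹ *ᵥ (x - z)
      = x ⬝ᵥ S⁻¹ *ᵥ x - 2 * (xb ⬝ᵥ x) + xb ⬝ᵥ S *ᵥ xb := by
    have h1 : x ⬝ᵥ S⁻¹ *ᵥ z = x ⬝ᵥ xb := by rw [hBz]
    have h2 : z ⬝ᵥ S⁻¹ *ᵥ x = x ⬝ᵥ xb := by
      rw [hsym _ hBsym z x, h1]
    have h3 : z ⬝ᵥ S⁻¹ *ᵥ z = xb ⬝ᵥ S *ᵥ xb := by
      rw [hBz, hz, dotProduct_comm]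
    rw [Matrix.mulVec_sub, sub_dotProduct, dotProduct_sub,
      dotProduct_sub, h1, h2, h3, dotProduct_comm x xb]
    ring
  rw [hexp] at h0
  linarith

/-- **Key matrix inequality in the proof of Theorem 1 of the paper.**
If `P` is a random `m × n` matrix with entrywise mean `P̄` and `S` is an almost surely
symmetric positive definite random `n × n` matrix with entrywise mean the identity,
then `E[P S⁻¹ Pᵀ] − P̄ P̄ᵀ` is positive semidefinite. -/
theorem expected_sandwich_sub_outer_posSemidef
    {Ω : Type*} [MeasurableSpace Ω] (ℙ : Measure Ω) [IsProbabilityMeasure ℙ]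
    {m n : ℕ} (hm : 0 < m) (hn : 0 < n)
    (P : Ω → Matrix (Fin m) (Fin n) ℝ) (Pbar : Matrix (Fin m) (Fin n) ℝ)
    (hPmean : (Matrix.of fun i j => ∫ ω, P ω i j ∂ℙ) = Pbar)
    (S : Ω → Matrix (Fin n) (Fin n) ℝ)
    (hSpd : ∀ᵐ ω ∂ℙ, (S ω).PosDef)
    (hSmean : (Matrix.of fun i j => ∫ ω, S ω i j ∂ℙ) = 1)
    (hPint : ∀ i j, Integrable (fun ω => P ω i j) ℙ)
    (hSint : ∀ i j, Integrable (fun ω => S ω i j) ℙ)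
    (hint : ∀ i j, Integrable (fun ω => (P ω * (S ω)⁻¹ * (P ω)ᵀ) i j) ℙ) :
    ((Matrix.of fun i j => ∫ ω, (P ω * (S ω)⁻¹ * (P ω)ᵀ) i j ∂ℙ)
      - Pbar * Pbarᵀ).PosSemidef := by
  set M : Matrix (Fin m) (Fin m) ℝ :=
    Matrix.of fun i j => ∫ ω, (P ω * (S ω)⁻¹ * (P ω)ᵀ) i j ∂ℙ with hM
  -- a.e. the integrand matrix is symmetric
  have hsymm_ae : ∀ᵐ ω ∂ℙ, (P ω * (S ω)⁻¹ * (P ω)ᵀ)ᵀ = P ω * (S ω)⁻¹ * (P ω)ᵀ := by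
    filter_upwards [hSpd] with ω hω
    have hBsym : ((S ω)⁻¹)ᵀ = (S ω)⁻¹ := by
      symm; simpa using congrArg Matrix.transpose hω.inv.1
    calc (P ω * (S ω)⁻¹ * (P ω)ᵀ)ᵀ
        = P ω * ((S ω)⁻¹)ᵀ * (P ω)ᵀ := by
          rw [Matrix.transpose_mul, Matrix.transpose_mul, Matrix.transpose_transpose,
            Matrix.mul_assoc]
      _ = P ω * (S ω)⁻¹ * (P ω)ᵀ := by rw [hBsym]
  have hMherm : M.IsHermitian := by
    rw [Matrix.IsHermitian]
    ext i j
    simp only [Matrix.conjTranspose_apply, hM, Matrix.of_apply, star_trivial]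
    refine integral_congr_ae ?_
    filter_upwards [hsymm_ae] with ω hω
    exact congrFun (congrFun hω i) j
  have hPbarherm : (Pbar * Pbarᵀ).IsHermitian := by
    rw [Matrix.IsHermitian]
    ext i j
    simp [Matrix.mul_apply, mul_comm]
  rw [Matrix.posSemidef_iff_dotProduct_mulVec]
  constructor
  · exact hMherm.sub hPbarherm
  intro v
  simp only [star_trivial, RCLike.re_to_real]
  -- reduce to scalar inequality
  set xb : Fin n → ℝ := Pbarᵀ *ᵥ v with hxb
  have hquad_bar : v ⬝ᵥ (Pbar * Pbarᵀ) *ᵥ v = xb ⬝ᵥ xb := by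
    rw [← Matrix.mulVec_mulVec, Matrix.dotProduct_mulVec, ← Matrix.mulVec_transpose]
  -- quadratic form of each sample matrix
  have hquad : ∀ ω, v ⬝ᵥ (P ω * (S ω)⁻¹ * (P ω)ᵀ) *ᵥ v
      = ((P ω)ᵀ *ᵥ v) ⬝ᵥ (S ω)⁻¹ *ᵥ ((P ω)ᵀ *ᵥ v) := by
    intro ω
    rw [← Matrix.mulVec_mulVec, ← Matrix.mulVec_mulVec, Matrix.dotProduct_mulVec,
      ← Matrix.mulVec_transpose]
  -- a.e. lower bound for the quadratic form
  have hae : ∀ᵐ ω ∂ℙ,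
      2 * (xb ⬝ᵥ (P ω)ᵀ *ᵥ v) - xb ⬝ᵥ (S ω) *ᵥ xb
        ≤ v ⬝ᵥ (P ω * (S ω)⁻¹ * (P ω)ᵀ) *ᵥ v := by
    filter_upwards [hSpd] with ω hω
    rw [hquad ω]
    exact key_pointwise hω ((P ω)ᵀ *ᵥ v) xb
  -- integrability of both sides
  have hP_quad_int : ∀ ω, xb ⬝ᵥ (P ω)ᵀ *ᵥ v = v ⬝ᵥ (P ω) *ᵥ xb := by
    intro ω
    rw [Matrix.mulVec_transpose, dotProduct_comm, ← Matrix.dotProduct_mulVec]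
  have hintP : Integrable (fun ω => v ⬝ᵥ (P ω) *ᵥ xb) ℙ := by
    have : ∀ ω, v ⬝ᵥ (P ω) *ᵥ xb = ∑ i, ∑ j, v i * (P ω i j * xb j) := by
      intro ω; simp [dotProduct, Matrix.mulVec, Finset.mul_sum]
    simp only [this]
    exact integrable_finset_sum _ fun i _ => integrable_finset_sum _ fun j _ =>
      ((hPint i j).mul_const _).const_mul _
  have hintS : Integrable (fun ω => xb ⬝ᵥ (S ω) *ᵥ xb) ℙ := by
    have : ∀ ω, xb ⬝ᵥ (S ω) *ᵥ xb = ∑ i, ∑ j, xb i * (S ω i j * xb j) := by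
      intro ω; simp [dotProduct, Matrix.mulVec, Finset.mul_sum]
    simp only [this]
    exact integrable_finset_sum _ fun i _ => integrable_finset_sum _ fun j _ =>
      ((hSint i j).mul_const _).const_mul _
  have hintA : Integrable (fun ω => v ⬝ᵥ (P ω * (S ω)⁻¹ * (P ω)ᵀ) *ᵥ v) ℙ := by
    have : ∀ ω, v ⬝ᵥ (P ω * (S ω)⁻¹ * (P ω)ᵀ) *ᵥ v
        = ∑ i, ∑ j, v i * ((P ω * (S ω)⁻¹ * (P ω)ᵀ) i j * v j) := by
      intro ω; simp [dotProduct, Matrix.mulVec, Finset.mul_sum]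
    simp only [this]
    exact integrable_finset_sum _ fun i _ => integrable_finset_sum _ fun j _ =>
      ((hint i j).mul_const _).const_mul _
  have hintg : Integrable
      (fun ω => 2 * (xb ⬝ᵥ (P ω)ᵀ *ᵥ v) - xb ⬝ᵥ (S ω) *ᵥ xb) ℙ := by
    refine Integrable.sub (Integrable.const_mul ?_ 2) hintS
    simpa only [hP_quad_int] using hintP
  -- integrate the a.e. inequality
  have hmono : ∫ ω, 2 * (xb ⬝ᵥ (P ω)ᵀ *ᵥ v) - xb ⬝ᵥ (S ω) *ᵥ xb ∂ℙ
      ≤ ∫ ω, v ⬝ᵥ (P ω * (S ω)⁻¹ * (P ω)ᵀ) *ᵥ v ∂ℙ :=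
    integral_mono_ae hintg hintA hae
  -- compute left integral
  have hIP : ∫ ω, v ⬝ᵥ (P ω) *ᵥ xb ∂ℙ = v ⬝ᵥ Pbar *ᵥ xb := by
    rw [integral_dotProduct_mulVec ℙ P hPint v xb, hPmean]
  have hIS : ∫ ω, xb ⬝ᵥ (S ω) *ᵥ xb ∂ℙ = xb ⬝ᵥ xb := by
    rw [integral_dotProduct_mulVec ℙ S hSint xb xb, hSmean, Matrix.one_mulVec]
  have hvP : v ⬝ᵥ Pbar *ᵥ xb = xb ⬝ᵥ xb := by
    rw [Matrix.dotProduct_mulVec, ← Matrix.mulVec_transpose, ← hxb, dotProduct_comm]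
  have hleft : ∫ ω, 2 * (xb ⬝ᵥ (P ω)ᵀ *ᵥ v) - xb ⬝ᵥ (S ω) *ᵥ xb ∂ℙ
      = xb ⬝ᵥ xb := by
    rw [integral_sub (Integrable.const_mul (by simpa only [hP_quad_int] using hintP) 2) hintS]
    rw [integral_const_mul]
    have : ∫ ω, xb ⬝ᵥ (P ω)ᵀ *ᵥ v ∂ℙ = xb ⬝ᵥ xb := by
      calc ∫ ω, xb ⬝ᵥ (P ω)ᵀ *ᵥ v ∂ℙ = ∫ ω, v ⬝ᵥ (P ω) *ᵥ xb ∂ℙ := by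
            simp only [hP_quad_int]
        _ = xb ⬝ᵥ xb := by rw [hIP, hvP]
    rw [this, hIS]; ring
  -- compute right integral
  have hright : ∫ ω, v ⬝ᵥ (P ω * (S ω)⁻¹ * (P ω)ᵀ) *ᵥ v ∂ℙ = v ⬝ᵥ M *ᵥ v :=
    integral_dotProduct_mulVec ℙ _ hint v v
  have hfinal : xb ⬝ᵥ xb ≤ v ⬝ᵥ M *ᵥ v := by
    rw [← hleft, ← hright]; exact hmono
  have : v ⬝ᵥ (M - Pbar * Pbarᵀ) *ᵥ v = v ⬝ᵥ M *ᵥ v - xb ⬝ᵥ xb := by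
    rw [Matrix.sub_mulVec, dotProduct_sub, hquad_bar]
  rw [this]
  linarith
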